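/- Let q > 1 be a real number, w ∈ ℤ, and let V = ⊕_{i∈ℤ} V_i be a finite-dimensional graded complex vector space with an automorphism φ preserving each V_i such that all eigenvalues of φ on V_i have absolute value q^{(w+i)/2}. Let f : V → V be a linear map with f(V_i) ⊆ V_i for all i and f∘φ = q·φ∘f. Then f = 0. -/

import Mathlib

open Module

/-- Key endomorphism lemma: if `B A = c • A B` with `|c| ≠ 1`, `c ≠ 0`, and all
eigenvalues of `A` have the same positive absolute value `r`, then `B = 0`. -/
private lemma qcommute_forces_zero {W : Type*} [AddCommGroup W] [Module ℂ W]
    [FiniteDimensional ℂ W] (A B : Module.End ℂ W) (c : ℂ) (hc0 : c ≠ 0)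
    (hc1 : ‖c‖ ≠ 1) (r : ℝ) (hr : 0 < r)
    (heig : ∀ μ : ℂ, A.HasEigenvalue μ → ‖μ‖ = r)
    (hcomm : ∀ x : W, B (A x) = c • A (B x)) : B = 0 := by
  -- pointwise intertwining identity for powers
  have hAB : ∀ x : W, A (B x) = c⁻¹ • B (A x) := by
    intro x; rw [hcomm x, smul_smul, inv_mul_cancel₀ hc0, one_smul]
  have key : ∀ (μ : ℂ) (k : ℕ) (x : W),
      ((A - (μ / c) • 1) ^ k) (B x) = (c⁻¹) ^ k • B (((A - μ • 1) ^ k) x) := by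
    intro μ k
    induction k with
    | zero => intro x; simp
    | succ k ih =>
      intro x
      have hstep : (A - (μ / c) • 1) (B x) = c⁻¹ • B ((A - μ • 1) x) := by
        simp only [LinearMap.sub_apply, LinearMap.smul_apply, Module.End.one_apply,
          map_sub, map_smul, hAB x, smul_sub, smul_smul]
        congr 1
        rw [div_eq_mul_inv, mul_comm]
      calc ((A - (μ / c) • 1) ^ (k + 1)) (B x)
          = ((A - (μ / c) • 1) ^ k) ((A - (μ / c) • 1) (B x)) := by
            rw [pow_succ, Module.End.mul_apply]
        _ = c⁻¹ • ((A - (μ / c) • 1) ^ k) (B ((A - μ • 1) x)) := by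
            rw [hstep, map_smul]
        _ = c⁻¹ • ((c⁻¹) ^ k • B (((A - μ • 1) ^ k) ((A - μ • 1) x))) := by
            rw [ih ((A - μ • 1) x)]
        _ = (c⁻¹) ^ (k + 1) • B (((A - μ • 1) ^ (k + 1)) x) := by
            rw [smul_smul, ← pow_succ', pow_succ (A - μ • 1) k, Module.End.mul_apply]
  -- B vanishes on each generalized eigenspace
  have hvanish : ∀ (μ : ℂ) (k : ℕ) (x : W), ((A - μ • 1) ^ k) x = 0 → B x = 0 := by
    intro μ k x hx
    by_contra hBx
    -- then μ/c is an eigenvalue of A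
    have hmem : ((A - (μ / c) • 1) ^ k) (B x) = 0 := by
      rw [key μ k x, hx, map_zero, smul_zero]
    have hk : 0 < k := by
      rcases Nat.eq_zero_or_pos k with h0 | h; · simp [h0] at hx; simp [hx] at hBx
      exact h
    have hx0 : x ≠ 0 := fun h => hBx (by simp [h])
    have hμ : A.HasEigenvalue μ := by
      refine Module.End.hasEigenvalue_of_hasGenEigenvalue (k := k) ?_
      rw [Module.End.HasGenEigenvalue, Module.End.HasUnifEigenvalue,
        Submodule.ne_bot_iff]
      exact ⟨x, by rw [Module.End.mem_genEigenspace_nat, LinearMap.mem_ker]; exact hx, hx0⟩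
    have hμc : A.HasEigenvalue (μ / c) := by
      refine Module.End.hasEigenvalue_of_hasGenEigenvalue (k := k) ?_
      rw [Module.End.HasGenEigenvalue, Module.End.HasUnifEigenvalue,
        Submodule.ne_bot_iff]
      exact ⟨B x, by rw [Module.End.mem_genEigenspace_nat, LinearMap.mem_ker]; exact hmem, hBx⟩
    have h1 : ‖μ‖ = r := heig μ hμ
    have h2 : ‖μ / c‖ = r := heig _ hμc
    rw [norm_div, h1] at h2
    have hcabs : ‖c‖ ≠ 0 := by simpa using hc0
    rw [div_eq_iff hcabs] at h2
    have h3 : r * 1 = r * ‖c‖ := by linarith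
    exact hc1 (mul_left_cancel₀ hr.ne' h3).symm
  -- generalized eigenspaces span
  ext x
  have htop : x ∈ (⊤ : Submodule ℂ W) := trivial
  rw [← Module.End.iSup_maxGenEigenspace_eq_top A] at htop
  simp only [LinearMap.zero_apply]
  refine Submodule.iSup_induction _ (motive := fun y => B y = 0) htop ?_ (map_zero B) ?_
  · intro μ y hy
    obtain ⟨k, hk⟩ := (Module.End.mem_maxGenEigenspace A μ y).mp hy
    exact hvanish μ k y hk
  · intro y z hy hz
    rw [map_add, hy, hz, add_zero]

/-- Linear-algebra core of "pure implies generic": on a graded finite-dimensional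
complex vector space with an automorphism `φ` whose eigenvalues on the `i`-th piece
all have absolute value `q^{(w+i)/2}`, any grading-preserving `f` with
`f ∘ φ = q · φ ∘ f` vanishes. -/
theorem graded_purity_forces_zero
    {V : Type*} [AddCommGroup V] [Module ℂ V] [FiniteDimensional ℂ V]
    (Vsub : ℤ → Submodule ℂ V) (hV : DirectSum.IsInternal Vsub)
    (φ : V ≃ₗ[ℂ] V) (hφ : ∀ i, ∀ x ∈ Vsub i, φ x ∈ Vsub i)
    (q : ℝ) (hq : 1 < q) (w : ℤ)
    (hpure : ∀ (i : ℤ) (μ : ℂ) (x : V), x ∈ Vsub i → x ≠ 0 → φ x = μ • x →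
      ‖μ‖ = q ^ (((w : ℝ) + (i : ℝ)) / 2))
    (f : V →ₗ[ℂ] V) (hf : ∀ i, ∀ x ∈ Vsub i, f x ∈ Vsub i)
    (hcomm : f ∘ₗ (φ : V →ₗ[ℂ] V) = (q : ℂ) • ((φ : V →ₗ[ℂ] V) ∘ₗ f)) :
    f = 0 := by
  have hq0 : (0 : ℝ) < q := lt_trans zero_lt_one hq
  have hcomm' : ∀ x : V, f (φ x) = (q : ℂ) • φ (f x) := by
    intro x
    have := LinearMap.congr_fun hcomm x
    simpa using this
  -- On each graded piece, the restriction of f vanishes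
  have hpiece : ∀ i : ℤ, ∀ x ∈ Vsub i, f x = 0 := by
    intro i
    set A : Module.End ℂ (Vsub i) := (φ : V →ₗ[ℂ] V).restrict (hφ i) with hA
    set B : Module.End ℂ (Vsub i) := f.restrict (hf i) with hB
    have hzero : B = 0 := by
      refine qcommute_forces_zero A B (q : ℂ) ?_ ?_ (q ^ (((w : ℝ) + (i : ℝ)) / 2)) ?_ ?_ ?_
      · exact_mod_cast hq0.ne'
      · rw [Complex.norm_of_nonneg hq0.le]; exact ne_of_gt hq
      · positivity
      · intro μ hμ
        obtain ⟨y, hy⟩ := hμ.exists_hasUnifEigenvector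
        have hy1 : A y = μ • y := hy.apply_eq_smul
        have hy0 : (y : V) ≠ 0 := fun h => hy.2 (Subtype.ext h)
        have hφy : φ (y : V) = μ • (y : V) := by
          have := congrArg (Subtype.val) hy1
          simpa [hA, LinearMap.restrict_apply] using this
        exact hpure i μ y y.2 hy0 hφy
      · intro x
        apply Subtype.ext
        simp only [hA, hB, LinearMap.restrict_apply, Submodule.coe_smul]
        exact hcomm' x
    intro x hx
    have : B ⟨x, hx⟩ = 0 := by rw [hzero]; rfl
    have := congrArg (Subtype.val) this
    simpa [hB, LinearMap.restrict_apply] using this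
  -- the pieces span V
  ext x
  have htop : x ∈ (⊤ : Submodule ℂ V) := trivial
  rw [← hV.submodule_iSup_eq_top] at htop
  simp only [LinearMap.zero_apply]
  refine Submodule.iSup_induction _ (motive := fun y => f y = 0) htop ?_ (map_zero f) ?_
  · intro i y hy; exact hpiece i y hy
  · intro y z hy hz; rw [map_add, hy, hz, add_zero]
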